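/- Let (Ω, m) be an ME coupling of countable groups Γ (acting on the left) and Λ (acting on the right) which is ergodic: every measurable subset of Ω invariant under both the Γ-action and the Λ-action is null or conull. Let X ⊆ Ω be a strict fundamental domain for the Λ-action with cocycle α : Γ × X → Λ and induced Γ-action γ·x, and Y ⊆ Ω a strict fundamental domain for the Γ-action with induced Λ-action y·λ; put μ = m|_X and ν = m|_Y. Let V be a complex Hilbert space and π a unitary representation of Λ on V. Assume the following (which holds whenever π is weakly mixing): the only measurable g : Y → V with ∫_Y ‖g‖² dν < ∞ satisfying g(y·λ) = π(λ⁻¹)(g(y)) for every λ ∈ Λ and ν-a.e. y, is g = 0 ν-a.e. Then the induced Γ-representation on L²(X, V) has no nonzero invariant vectors: every measurable φ : X → V with ∫_X ‖φ‖² dμ < ∞ satisfying π(α(γ, x)⁻¹)(φ(γ·x)) = φ(x) for every γ ∈ Γ and μ-a.e. x ∈ X must vanish μ-almost everywhere. -/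

import Mathlib

open MeasureTheory Filter Topology

/-- `X` is a measurable fundamental domain of finite measure for the action of `G` on `Ω`
given by the family of maps `T g : Ω → Ω`: the translates of `X` cover `Ω` up to a null set
and pairwise intersect in null sets. -/
def IsFundDom {G Ω : Type} [Group G] [MeasurableSpace Ω]
    (T : G → Ω → Ω) (m : Measure Ω) (X : Set Ω) : Prop :=
  MeasurableSet X ∧ (∀ᵐ ω ∂m, ∃ g : G, T g ω ∈ X) ∧
    (∀ g : G, g ≠ 1 → m (X ∩ T g ⁻¹' X) = 0) ∧ m X ≠ ⊤

/-- `(Ω, m)` together with the left action `L` of `Γ` and the right action `R` of `Λ`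
is a Measure Equivalence coupling of `Γ` with `Λ`: the measure is σ-finite, the two
measure-preserving actions commute, are essentially free, and each admits a measurable
fundamental domain of finite measure. -/
structure IsMECoupling {Γ Λ Ω : Type} [Group Γ] [Group Λ] [MeasurableSpace Ω]
    (m : Measure Ω) (L : Γ → Ω → Ω) (R : Λ → Ω → Ω) : Prop where
  sigmaFinite : SigmaFinite m
  L_one : ∀ ω, L 1 ω = ω
  L_mul : ∀ γ₁ γ₂ ω, L (γ₁ * γ₂) ω = L γ₁ (L γ₂ ω)
  R_one : ∀ ω, R 1 ω = ω
  R_mul : ∀ l₁ l₂ ω, R (l₁ * l₂) ω = R l₂ (R l₁ ω)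
  actions_comm : ∀ γ l ω, L γ (R l ω) = R l (L γ ω)
  L_mp : ∀ γ, MeasurePreserving (L γ) m m
  R_mp : ∀ l, MeasurePreserving (R l) m m
  L_essFree : ∀ γ : Γ, γ ≠ 1 → m {ω | L γ ω = ω} = 0
  R_essFree : ∀ l : Λ, l ≠ 1 → m {ω | R l ω = ω} = 0
  fund_L : ∃ Y : Set Ω, IsFundDom L m Y
  fund_R : ∃ X : Set Ω, IsFundDom R m X

/-- Auxiliary: a function defined by countably many measurable pieces is measurable. -/
lemma measurable_pieces {Ω V : Type} [MeasurableSpace Ω] [MeasurableSpace V]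
    {k : Ω → ℕ} {F : ℕ → Ω → V} (hk : Measurable k) (hF : ∀ n, Measurable (F n)) :
    Measurable fun ω => F (k ω) ω := by
  intro s hs
  have hset : (fun ω => F (k ω) ω) ⁻¹' s = ⋃ n, (k ⁻¹' {n}) ∩ (F n ⁻¹' s) := by
    ext ω
    simp only [Set.mem_preimage, Set.mem_iUnion, Set.mem_inter_iff, Set.mem_singleton_iff]
    constructor
    · intro hmem; exact ⟨k ω, rfl, hmem⟩
    · rintro ⟨n, hn, hmem⟩; rwa [hn]
  rw [hset]
  exact MeasurableSet.iUnion fun n => (hk (measurableSet_singleton n)).inter (hF n hs)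

/-- Lemma 8.2.  Let `(Ω, m)` be an ergodic ME coupling of `Γ` with `Λ`,
`X` a strict fundamental domain for the `Λ`-action with cocycle `α` and induced `Γ`-action
`γ·x = (γx)α(γ,x)⁻¹`, and `Y` a strict fundamental domain for the `Γ`-action with induced
`Λ`-action `y·λ = β(y,λ)⁻¹(yλ)`.  Let `π` be a unitary representation of `Λ` on a complex
Hilbert space `V` such that the only `g ∈ L²(Y, V)` with `g(y·λ) = π(λ⁻¹)(g(y))` is `g = 0`
(which holds when `π` is weakly mixing).  Then the induced `Γ`-representation on `L²(X, V)`
has no nonzero invariant vectors. -/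
theorem induced_no_invariant_vectors {Γ Λ Ω V : Type}
    [Group Γ] [Countable Γ] [Group Λ] [Countable Λ]
    [MeasurableSpace Ω] (m : Measure Ω)
    (L : Γ → Ω → Ω) (R : Λ → Ω → Ω) (h : IsMECoupling m L R)
    (herg : ∀ A : Set Ω, MeasurableSet A → (∀ γ : Γ, L γ ⁻¹' A = A) →
      (∀ lam : Λ, R lam ⁻¹' A = A) → m A = 0 ∨ m Aᶜ = 0)
    (X Y : Set Ω) (hXm : MeasurableSet X) (hYm : MeasurableSet Y)
    (hX : ∀ s : Ω, ∃! x, x ∈ X ∧ ∃ lam : Λ, R lam s = x)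
    (hY : ∀ s : Ω, ∃! y, y ∈ Y ∧ ∃ γ : Γ, L γ s = y)
    (α : Γ → Ω → Λ) (hα : ∀ γ : Γ, ∀ x ∈ X, R (α γ x)⁻¹ (L γ x) ∈ X)
    (β : Ω → Λ → Γ) (hβ : ∀ y ∈ Y, ∀ lam : Λ, L (β y lam)⁻¹ (R lam y) ∈ Y)
    [NormedAddCommGroup V] [InnerProductSpace ℂ V] [CompleteSpace V]
    [MeasurableSpace V] [BorelSpace V]
    (π : Λ →* (V ≃ₗᵢ[ℂ] V))
    (hwm : ∀ g : Ω → V, Measurable g →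
      Integrable (fun y => ‖g y‖ ^ 2) (m.restrict Y) →
      (∀ lam : Λ, ∀ᵐ y ∂m.restrict Y,
        g (L (β y lam)⁻¹ (R lam y)) = (π (lam⁻¹)) (g y)) →
      g =ᵐ[m.restrict Y] 0) :
    ∀ φ : Ω → V, Measurable φ →
      Integrable (fun x => ‖φ x‖ ^ 2) (m.restrict X) →
      (∀ γ : Γ, ∀ᵐ x ∂m.restrict X,
        (π ((α γ x)⁻¹)) (φ (R (α γ x)⁻¹ (L γ x))) = φ x) →
      φ =ᵐ[m.restrict X] 0 := by
  classical
  intro φ hφm hφint hφinv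
  -- preimages of null sets under the measure-preserving maps are null
  have preim_null : ∀ (f : Ω → Ω), MeasurePreserving f m m →
      ∀ (S : Set Ω), m S = 0 → m (f ⁻¹' S) = 0 := by
    intro f hf S hS
    have hle := Measure.le_map_apply hf.aemeasurable S
    rw [hf.map_eq] at hle
    exact le_antisymm (le_trans hle hS.le) zero_le
  -- a surjection ℕ → Λ
  haveI : Nonempty Λ := ⟨1⟩
  obtain ⟨u, hu⟩ := exists_surjective_nat Λ
  -- the measurable selector
  have hex : ∀ ω : Ω, ∃ n : ℕ, R (u n) ω ∈ X := by
    intro ω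
    obtain ⟨x, ⟨hxX, lam, hlam⟩, -⟩ := hX ω
    obtain ⟨n, rfl⟩ := hu lam
    exact ⟨n, by rwa [hlam]⟩
  set k : Ω → ℕ := fun ω => Nat.find (hex ω) with hk_def
  set σ : Ω → Λ := fun ω => u (k ω) with hσ_def
  set p : Ω → Ω := fun ω => R (σ ω) ω with hp_def
  have hpX : ∀ ω, p ω ∈ X := fun ω => Nat.find_spec (hex ω)
  have hkm : Measurable k := by
    apply measurable_find
    intro n
    exact (h.R_mp (u n)).measurable hXm
  -- the extension Φ of φ to Ω
  set Φ : Ω → V := fun ω => (π (σ ω)) (φ (p ω)) with hΦ_def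
  have hΦm : Measurable Φ := by
    have : Φ = fun ω => (fun n ω' => (π (u n)) (φ (R (u n) ω'))) (k ω) ω := rfl
    rw [this]
    exact measurable_pieces hkm fun n =>
      (π (u n)).continuous.measurable.comp (hφm.comp (h.R_mp (u n)).measurable)
  -- pointwise uniqueness of the X-representative
  have hP1 : ∀ (ω : Ω) (lam : Λ), R lam ω ∈ X → R lam ω = p ω := by
    intro ω lam hmem
    obtain ⟨x, -, hun⟩ := hX ω
    have h1 := hun _ ⟨hmem, lam, rfl⟩
    have h2 := hun _ ⟨hpX ω, σ ω, rfl⟩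
    rw [h1, h2]
  -- the null set where the Λ-translate into X is not unique
  set bad₀ : Set Ω :=
    ⋃ (q : Λ × Λ) (_ : q.1 ≠ q.2), (R q.1) ⁻¹' {ω | R (q.1⁻¹ * q.2) ω = ω} with hbad₀_def
  have hbad₀ : m bad₀ = 0 := by
    refine measure_iUnion_null fun q => measure_iUnion_null fun hq => ?_
    refine preim_null _ (h.R_mp q.1) _ (h.R_essFree _ ?_)
    intro hcon
    exact hq (inv_mul_eq_one.mp hcon)
  have σ_eq : ∀ ω ∉ bad₀, ∀ lam : Λ, R lam ω ∈ X → σ ω = lam := by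
    intro ω hω lam hmem
    by_contra hne
    apply hω
    refine Set.mem_iUnion.mpr ⟨(σ ω, lam), Set.mem_iUnion.mpr ⟨hne, ?_⟩⟩
    show R ((σ ω)⁻¹ * lam) (R (σ ω) ω) = R (σ ω) ω
    rw [← h.R_mul, mul_inv_cancel_left]
    exact (hP1 ω lam hmem).symm ▸ rfl
  -- the invariance predicate from the hypothesis on φ
  set Pg : Γ → Ω → Prop :=
    fun γ x => (π ((α γ x)⁻¹)) (φ (R (α γ x)⁻¹ (L γ x))) = φ x with hPg_def
  have hPgnull : ∀ γ : Γ, m ({x | ¬ Pg γ x} ∩ X) = 0 := by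
    intro γ
    have := ae_iff.mp (hφinv γ)
    rwa [Measure.restrict_apply' hXm] at this
  -- the conull good set E
  set E : Set Ω := {ω | ω ∉ bad₀ ∧ (∀ lam : Λ, R lam ω ∉ bad₀) ∧
      (∀ γ : Γ, L γ ω ∉ bad₀) ∧ (∀ γ : Γ, Pg γ (p ω))} with hE_def
  have hE : ∀ᵐ ω ∂m, ω ∈ E := by
    have h1 : ∀ᵐ ω ∂m, ω ∉ bad₀ := by
      rw [ae_iff]
      have : {ω : Ω | ¬ ω ∉ bad₀} = bad₀ := by ext ω; simp
      rwa [this]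
    have h2 : ∀ᵐ ω ∂m, ∀ lam : Λ, R lam ω ∉ bad₀ := by
      rw [ae_all_iff]
      intro lam
      rw [ae_iff]
      have : {ω : Ω | ¬ R lam ω ∉ bad₀} = R lam ⁻¹' bad₀ := by ext ω; simp
      rw [this]
      exact preim_null _ (h.R_mp lam) _ hbad₀
    have h3 : ∀ᵐ ω ∂m, ∀ γ : Γ, L γ ω ∉ bad₀ := by
      rw [ae_all_iff]
      intro γ
      rw [ae_iff]
      have : {ω : Ω | ¬ L γ ω ∉ bad₀} = L γ ⁻¹' bad₀ := by ext ω; simp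
      rw [this]
      exact preim_null _ (h.L_mp γ) _ hbad₀
    have h4 : ∀ᵐ ω ∂m, ∀ γ : Γ, Pg γ (p ω) := by
      rw [ae_all_iff]
      intro γ
      rw [ae_iff]
      have hsub : {ω : Ω | ¬ Pg γ (p ω)} ⊆
          ⋃ lam : Λ, R lam ⁻¹' ({x | ¬ Pg γ x} ∩ X) := by
        intro ω hω
        exact Set.mem_iUnion.mpr ⟨σ ω, hω, hpX ω⟩
      refine measure_mono_null hsub (measure_iUnion_null fun lam => ?_)
      exact preim_null _ (h.R_mp lam) _ (hPgnull γ)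
    filter_upwards [h1, h2, h3, h4] with ω a b c d
    exact ⟨a, b, c, d⟩
  have hEc : m Eᶜ = 0 := by
    have := ae_iff.mp hE
    exact this
  -- the key Λ-equivariance of Φ
  have keyR : ∀ ω ∈ E, ∀ lam : Λ, Φ (R lam ω) = (π lam⁻¹) (Φ ω) := by
    rintro ω ⟨h0, h1, -, -⟩ lam
    have hx : R (lam⁻¹ * σ ω) (R lam ω) ∈ X := by
      rw [← h.R_mul, mul_inv_cancel_left]
      exact hpX ω
    have hσ : σ (R lam ω) = lam⁻¹ * σ ω := σ_eq _ (h1 lam) _ hx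
    have hp : p (R lam ω) = p ω := by
      show R (σ (R lam ω)) (R lam ω) = R (σ ω) ω
      rw [hσ, ← h.R_mul, mul_inv_cancel_left]
    show (π (σ (R lam ω))) (φ (p (R lam ω))) = (π lam⁻¹) ((π (σ ω)) (φ (p ω)))
    rw [hσ, hp, map_mul, LinearIsometryEquiv.coe_mul, Function.comp_apply]
  -- the key Γ-invariance of Φ
  have keyL : ∀ ω ∈ E, ∀ γ : Γ, Φ (L γ ω) = Φ ω := by
    rintro ω ⟨h0, -, h2, h3⟩ γ
    have hxX : p ω ∈ X := hpX ω
    have hx' : R (σ ω * (α γ (p ω))⁻¹) (L γ ω) ∈ X := by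
      rw [h.R_mul, ← h.actions_comm]
      exact hα γ (p ω) hxX
    have hσ' : σ (L γ ω) = σ ω * (α γ (p ω))⁻¹ := σ_eq _ (h2 γ) _ hx'
    have hp' : p (L γ ω) = R (α γ (p ω))⁻¹ (L γ (p ω)) := by
      show R (σ (L γ ω)) (L γ ω) = _
      rw [hσ', h.R_mul, ← h.actions_comm]
    have hPgx : Pg γ (p ω) := h3 γ
    show (π (σ (L γ ω))) (φ (p (L γ ω))) = (π (σ ω)) (φ (p ω))
    rw [hσ', hp', map_mul, LinearIsometryEquiv.coe_mul, Function.comp_apply, hPgx]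
  -- Φ agrees with φ a.e. on X
  have hΦφ : ∀ᵐ x ∂m.restrict X, Φ x = φ x := by
    have h1 : ∀ᵐ x ∂m.restrict X, x ∉ bad₀ := by
      refine ae_restrict_of_ae ?_
      rw [ae_iff]
      have : {ω : Ω | ¬ ω ∉ bad₀} = bad₀ := by ext ω; simp
      rwa [this]
    have h2 : ∀ᵐ x ∂m.restrict X, x ∈ X := ae_restrict_mem hXm
    filter_upwards [h1, h2] with x hx hxX
    have hσ1 : σ x = 1 := σ_eq x hx 1 (by rw [h.R_one]; exact hxX)
    show (π (σ x)) (φ (R (σ x) x)) = φ x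
    rw [hσ1, h.R_one, map_one, LinearIsometryEquiv.coe_one, id_eq]
  -- m Y is finite, via the given finite-measure fundamental domain for L
  obtain ⟨Y', hY'fd⟩ := h.fund_L
  obtain ⟨hY'm, hY'cov, hY'disj, hY'fin⟩ := hY'fd
  have hYfin : m Y ≠ ⊤ := by
    have hcov : m (Y \ ⋃ γ : Γ, L γ ⁻¹' Y') = 0 := by
      rw [ae_iff] at hY'cov
      refine measure_mono_null ?_ hY'cov
      intro ω hω
      simp only [Set.mem_diff, Set.mem_iUnion, Set.mem_preimage, not_exists] at hω
      simpa using hω.2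
    have hle1 : m Y ≤ ∑' γ : Γ, m (Y ∩ L γ ⁻¹' Y') := by
      calc m Y ≤ m (Y ∩ ⋃ γ : Γ, L γ ⁻¹' Y') + m (Y \ ⋃ γ : Γ, L γ ⁻¹' Y') :=
            measure_le_inter_add_diff m Y _
        _ = m (⋃ γ : Γ, Y ∩ L γ ⁻¹' Y') := by rw [hcov, add_zero, Set.inter_iUnion]
        _ ≤ ∑' γ : Γ, m (Y ∩ L γ ⁻¹' Y') := measure_iUnion_le _
    have hpiece : ∀ γ : Γ, m (Y ∩ L γ ⁻¹' Y') = m (L γ⁻¹ ⁻¹' Y ∩ Y') := by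
      intro γ
      have hset : Y ∩ L γ ⁻¹' Y' = L γ ⁻¹' (L γ⁻¹ ⁻¹' Y ∩ Y') := by
        ext ω
        simp only [Set.mem_inter_iff, Set.mem_preimage]
        constructor
        · rintro ⟨hy, hy'⟩
          refine ⟨?_, hy'⟩
          rw [← h.L_mul, inv_mul_cancel, h.L_one]
          exact hy
        · rintro ⟨hy, hy'⟩
          refine ⟨?_, hy'⟩
          rwa [← h.L_mul, inv_mul_cancel, h.L_one] at hy
      rw [hset]
      exact (h.L_mp γ).measure_preimage
        (((h.L_mp γ⁻¹).measurable hYm).inter hY'm).nullMeasurableSet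
    have hsum : ∑' γ : Γ, m (Y ∩ L γ ⁻¹' Y') = ∑' γ : Γ, m (L γ ⁻¹' Y ∩ Y') := by
      rw [tsum_congr hpiece]
      exact (Equiv.inv Γ).tsum_eq fun γ => m (L γ ⁻¹' Y ∩ Y')
    have hdisj : Pairwise (Function.onFun (AEDisjoint m) fun γ : Γ => L γ ⁻¹' Y ∩ Y') := by
      intro γ δ hne
      refine measure_mono_null ?_
        (preim_null _ (h.L_mp γ) _ (h.L_essFree (δ * γ⁻¹) ?_))
      · intro ω hω
        obtain ⟨⟨hγ, -⟩, ⟨hδ, -⟩⟩ := hω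
        have heq : L γ ω = L δ ω := by
          obtain ⟨y, -, hun⟩ := hY ω
          rw [hun _ ⟨hγ, γ, rfl⟩, hun _ ⟨hδ, δ, rfl⟩]
        show L (δ * γ⁻¹) (L γ ω) = L γ ω
        rw [← h.L_mul, mul_assoc, inv_mul_cancel, mul_one, ← heq]
      · exact fun hcon => hne (mul_inv_eq_one.mp hcon).symm
    have hmeas : ∀ γ : Γ, NullMeasurableSet (L γ ⁻¹' Y ∩ Y') m :=
      fun γ => (((h.L_mp γ).measurable hYm).inter hY'm).nullMeasurableSet
    have hsum2 : ∑' γ : Γ, m (L γ ⁻¹' Y ∩ Y') = m (⋃ γ : Γ, L γ ⁻¹' Y ∩ Y') :=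
      (measure_iUnion₀ hdisj hmeas).symm
    have hle2 : m (⋃ γ : Γ, L γ ⁻¹' Y ∩ Y') ≤ m Y' :=
      measure_mono (Set.iUnion_subset fun γ => Set.inter_subset_right)
    intro htop
    apply hY'fin
    have : m Y ≤ m Y' := by
      calc m Y ≤ ∑' γ : Γ, m (Y ∩ L γ ⁻¹' Y') := hle1
        _ = ∑' γ : Γ, m (L γ ⁻¹' Y ∩ Y') := hsum
        _ = m (⋃ γ : Γ, L γ ⁻¹' Y ∩ Y') := hsum2
        _ ≤ m Y' := hle2
    rw [htop] at this
    exact top_le_iff.mp this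
  -- the bounded truncation of Φ
  set hfun : V → V := fun v => (1 + ‖v‖)⁻¹ • v with hfun_def
  have hfun_cont : Continuous hfun := by
    have hc : Continuous fun v : V => (1 + ‖v‖)⁻¹ :=
      (continuous_const.add continuous_norm : Continuous fun v : V => 1 + ‖v‖).inv₀
        fun v => (add_pos_of_pos_of_nonneg one_pos (norm_nonneg v)).ne'
    exact hc.smul continuous_id
  set g : Ω → V := fun ω => hfun (Φ ω) with hg_def
  have hgm : Measurable g := hfun_cont.measurable.comp hΦm
  have hg_norm : ∀ ω, ‖g ω‖ ≤ 1 := by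
    intro ω
    have h0 : (0:ℝ) < 1 + ‖Φ ω‖ := by positivity
    show ‖(1 + ‖Φ ω‖)⁻¹ • Φ ω‖ ≤ 1
    rw [norm_smul, Real.norm_eq_abs, abs_of_pos (inv_pos.mpr h0), inv_mul_le_iff₀ h0]
    linarith [norm_nonneg (Φ ω)]
  have hfun_comm : ∀ (lam : Λ) (v : V), hfun ((π lam) v) = (π lam) (hfun v) := by
    intro lam v
    show (1 + ‖(π lam) v‖)⁻¹ • (π lam) v = (π lam) ((1 + ‖v‖)⁻¹ • v)
    rw [(π lam).norm_map, ← Complex.coe_smul, ← Complex.coe_smul,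
      LinearIsometryEquiv.map_smul]
  haveI : IsFiniteMeasure (m.restrict Y) :=
    ⟨by rw [Measure.restrict_apply_univ]; exact lt_top_iff_ne_top.mpr hYfin⟩
  have hgint : Integrable (fun y => ‖g y‖ ^ 2) (m.restrict Y) := by
    refine ⟨(hgm.norm.pow_const 2).aestronglyMeasurable,
      HasFiniteIntegral.of_bounded (C := 1) (ae_of_all _ fun y => ?_)⟩
    rw [Real.norm_eq_abs, abs_of_nonneg (by positivity)]
    calc ‖g y‖ ^ 2 ≤ 1 ^ 2 := pow_le_pow_left₀ (norm_nonneg _) (hg_norm y) 2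
      _ = 1 := one_pow 2
  -- Λ-equivariance of g on Y in the sense required by hwm
  have hequiv : ∀ lam : Λ, ∀ᵐ y ∂m.restrict Y,
      g (L (β y lam)⁻¹ (R lam y)) = (π lam⁻¹) (g y) := by
    intro lam
    have hRE : ∀ᵐ y ∂m, R lam y ∈ E := by
      rw [ae_iff]
      have : {y : Ω | ¬ R lam y ∈ E} = R lam ⁻¹' Eᶜ := by ext y; simp
      rw [this]
      exact preim_null _ (h.R_mp lam) _ hEc
    refine ae_restrict_of_ae ?_
    filter_upwards [hE, hRE] with y hyE hyRE
    have h1 : Φ (L (β y lam)⁻¹ (R lam y)) = Φ (R lam y) := keyL _ hyRE _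
    have h2 : Φ (R lam y) = (π lam⁻¹) (Φ y) := keyR _ hyE lam
    show hfun (Φ (L (β y lam)⁻¹ (R lam y))) = (π lam⁻¹) (hfun (Φ y))
    rw [h1, h2, hfun_comm]
  -- apply the weak-mixing hypothesis
  have hg0 := hwm g hgm hgint hequiv
  have hΦ0Y : ∀ᵐ y ∂m.restrict Y, Φ y = 0 := by
    filter_upwards [hg0] with y hy
    have h0 : ((1 + ‖Φ y‖)⁻¹ : ℝ) ≠ 0 := by positivity
    have : ((1 + ‖Φ y‖)⁻¹ : ℝ) • Φ y = 0 := hy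
    exact (smul_eq_zero.mp this).resolve_left h0
  -- the ergodicity argument
  set A : Set Ω := {ω | Φ ω ≠ 0} with hA_def
  have hAm : MeasurableSet A := hΦm isClosed_singleton.measurableSet.compl
  set N : Set Ω := toMeasurable m Eᶜ with hN_def
  have hNm : MeasurableSet N := measurableSet_toMeasurable m Eᶜ
  have hN0 : m N = 0 := by rw [hN_def, measure_toMeasurable]; exact hEc
  have hEN : Eᶜ ⊆ N := subset_toMeasurable m Eᶜ
  set N' : Set Ω := ⋃ q : Γ × Λ, (fun ω => L q.1 (R q.2 ω)) ⁻¹' N with hN'_def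
  have hN'm : MeasurableSet N' :=
    MeasurableSet.iUnion fun q =>
      ((h.L_mp q.1).comp (h.R_mp q.2)).measurable hNm
  have hN'0 : m N' = 0 :=
    measure_iUnion_null fun q => preim_null _ ((h.L_mp q.1).comp (h.R_mp q.2)) _ hN0
  have hEN' : Eᶜ ⊆ N' := by
    intro ω hω
    refine Set.mem_iUnion.mpr ⟨(1, 1), ?_⟩
    show L 1 (R 1 ω) ∈ N
    rw [h.R_one, h.L_one]
    exact hEN hω
  have hnotN' : ∀ ω ∉ N', ω ∈ E := by
    intro ω hω
    by_contra hc
    exact hω (hEN' hc)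
  have hN'L : ∀ γ : Γ, L γ ⁻¹' N' = N' := by
    intro γ
    ext ω
    simp only [hN'_def, Set.mem_preimage, Set.mem_iUnion]
    constructor
    · rintro ⟨⟨γ', lam⟩, hq⟩
      refine ⟨(γ' * γ, lam), ?_⟩
      show L (γ' * γ) (R lam ω) ∈ N
      rw [h.L_mul, h.actions_comm]
      exact hq
    · rintro ⟨⟨γ', lam⟩, hq⟩
      refine ⟨(γ' * γ⁻¹, lam), ?_⟩
      show L (γ' * γ⁻¹) (R lam (L γ ω)) ∈ N
      rw [← h.actions_comm, ← h.L_mul, mul_assoc, inv_mul_cancel, mul_one]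
      exact hq
  have hN'R : ∀ lam : Λ, R lam ⁻¹' N' = N' := by
    intro lam
    ext ω
    simp only [hN'_def, Set.mem_preimage, Set.mem_iUnion]
    constructor
    · rintro ⟨⟨γ', lam'⟩, hq⟩
      refine ⟨(γ', lam * lam'), ?_⟩
      show L γ' (R (lam * lam') ω) ∈ N
      rw [h.R_mul]
      exact hq
    · rintro ⟨⟨γ', lam'⟩, hq⟩
      refine ⟨(γ', lam⁻¹ * lam'), ?_⟩
      show L γ' (R (lam⁻¹ * lam') (R lam ω)) ∈ N
      rw [← h.R_mul, mul_inv_cancel_left]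
      exact hq
  set Atil : Set Ω := A ∪ N' with hAtil_def
  have hAtm : MeasurableSet Atil := hAm.union hN'm
  have hinvL : ∀ γ : Γ, L γ ⁻¹' Atil = Atil := by
    intro γ
    rw [hAtil_def, Set.preimage_union, hN'L γ]
    ext ω
    simp only [Set.mem_union, Set.mem_preimage]
    by_cases hω : ω ∈ N'
    · simp [hω]
    · have hωE : ω ∈ E := hnotN' ω hω
      have hkey : Φ (L γ ω) = Φ ω := keyL ω hωE γ
      constructor
      · rintro (hA | hN)
        · left; show Φ ω ≠ 0; rwa [← hkey]
        · exact Or.inr hN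
      · rintro (hA | hN)
        · left; show Φ (L γ ω) ≠ 0; rwa [hkey]
        · exact Or.inr hN
  have hinvR : ∀ lam : Λ, R lam ⁻¹' Atil = Atil := by
    intro lam
    rw [hAtil_def, Set.preimage_union, hN'R lam]
    ext ω
    simp only [Set.mem_union, Set.mem_preimage]
    by_cases hω : ω ∈ N'
    · simp [hω]
    · have hωE : ω ∈ E := hnotN' ω hω
      have hkey : Φ (R lam ω) = (π lam⁻¹) (Φ ω) := keyR ω hωE lam
      constructor
      · rintro (hA | hN)
        · left
          show Φ ω ≠ 0
          intro hc
          apply hA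
          show Φ (R lam ω) = 0
          rw [hkey, hc, map_zero]
        · exact Or.inr hN
      · rintro (hA | hN)
        · left
          show Φ (R lam ω) ≠ 0
          rw [hkey]
          intro hc
          exact hA ((π lam⁻¹).map_eq_zero_iff.mp hc)
        · exact Or.inr hN
  rcases herg Atil hAtm hinvL hinvR with hz | hz
  · -- Φ vanishes a.e. on Ω, hence φ vanishes a.e. on X
    have hA0 : m A = 0 := measure_mono_null Set.subset_union_left hz
    have hΦ0 : ∀ᵐ x ∂m.restrict X, Φ x = 0 := ae_restrict_of_ae (ae_iff.mpr hA0)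
    filter_upwards [hΦφ, hΦ0] with x h1 h2
    show φ x = 0
    rw [← h1, h2]
  · -- Φ is a.e. nonzero; but Φ = 0 a.e. on Y, so m Y = 0 and m = 0
    have hAc : m Aᶜ = 0 := by
      have hsub : Aᶜ ⊆ Atilᶜ ∪ N' := by
        intro ω hω
        by_cases hn : ω ∈ N'
        · exact Or.inr hn
        · left
          simp only [hAtil_def, Set.mem_compl_iff, Set.mem_union, not_or]
          exact ⟨hω, hn⟩
      exact measure_mono_null hsub (measure_union_null hz hN'0)
    have hAY : m (A ∩ Y) = 0 := by
      have := ae_iff.mp hΦ0Y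
      rwa [Measure.restrict_apply' hYm] at this
    have hY0 : m Y = 0 := by
      have hsub : Y ⊆ (A ∩ Y) ∪ Aᶜ := by
        intro ω hω
        by_cases hA : ω ∈ A
        · exact Or.inl ⟨hA, hω⟩
        · exact Or.inr hA
      exact measure_mono_null hsub (measure_union_null hAY hAc)
    have hm0 : m = 0 := by
      rw [← Measure.measure_univ_eq_zero]
      have hsub : (Set.univ : Set Ω) ⊆ ⋃ γ : Γ, L γ ⁻¹' Y := by
        intro s _
        obtain ⟨y, ⟨hyY, γ, hγ⟩, -⟩ := hY s
        exact Set.mem_iUnion.mpr ⟨γ, by rw [Set.mem_preimage, hγ]; exact hyY⟩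
      exact measure_mono_null hsub
        (measure_iUnion_null fun γ => preim_null _ (h.L_mp γ) _ hY0)
    rw [hm0]
    simp [Filter.EventuallyEq]
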